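/- Let N1, N2 > 0, ρ1 ∈ (0,N1), ρ2 ∈ (0,N2), ν1 > 0, and define D1(k1,k2) as the cancel-on-complete mean response time formula: D1(k1,k2) = (1/ν1)·( 1/(N1+N2−ρ1−ρ2) + ( (1−ρ1/(N1+N2))·(1/(N1+k2)) / (1−ρ1/(N1+k2))² − (1/(N1+N2)) / (1−ρ1/(N1+k2)) ) / ( (1−ρ1/(N1+N2))/(1−ρ1/(N1+k2)) + (1−ρ2/(N1+N2))/(1−ρ2/(N2+k1)) − 1 ) ). If k2 < N2, then D1(k1,k2) is a strictly increasing function of k1 on [0,N1]. -/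

import Mathlib

noncomputable def D1coc (N1 N2 ρ1 ρ2 ν1 k1 k2 : ℝ) : ℝ :=
  (1 / ν1) * (1 / (N1 + N2 - ρ1 - ρ2) +
    ((1 - ρ1 / (N1 + N2)) * (1 / (N1 + k2)) / (1 - ρ1 / (N1 + k2)) ^ 2
      - (1 / (N1 + N2)) / (1 - ρ1 / (N1 + k2)))
    / ((1 - ρ1 / (N1 + N2)) / (1 - ρ1 / (N1 + k2))
        + (1 - ρ2 / (N1 + N2)) / (1 - ρ2 / (N2 + k1)) - 1))

theorem stmt_2 (N1 N2 ρ1 ρ2 ν1 : ℝ) (hN1 : 0 < N1) (hN2 : 0 < N2)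
    (hρ1 : 0 < ρ1) (hρ1' : ρ1 < N1) (hρ2 : 0 < ρ2) (hρ2' : ρ2 < N2)
    (hν1 : 0 < ν1) :
    ∀ k2 : ℝ, 0 ≤ k2 → k2 < N2 →
      StrictMonoOn (fun k1 => D1coc N1 N2 ρ1 ρ2 ν1 k1 k2) (Set.Icc 0 N1) := by
  intro k2 hk2 hk2'
  intro x hx y hy hxy
  obtain ⟨hx0, hxN⟩ := hx
  obtain ⟨hy0, hyN⟩ := hy
  simp only [D1coc]
  have hapos : (0:ℝ) < N1 + k2 := by linarith
  have hbpos : (0:ℝ) < N1 + N2 := by linarith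
  have hρ1a : ρ1 < N1 + k2 := by linarith
  have hab : N1 + k2 < N1 + N2 := by linarith
  have hua : 0 < 1 - ρ1 / (N1 + k2) := by
    rw [sub_pos]; exact (div_lt_one hapos).mpr hρ1a
  have hub : 0 < 1 - ρ1 / (N1 + N2) := by
    rw [sub_pos]; exact (div_lt_one hbpos).mpr (by linarith)
  -- C1 ≥ 1
  have hC1 : 1 ≤ (1 - ρ1 / (N1 + N2)) / (1 - ρ1 / (N1 + k2)) := by
    rw [le_div_iff₀ hua]
    have : ρ1 / (N1 + N2) ≤ ρ1 / (N1 + k2) :=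
      div_le_div_of_nonneg_left hρ1.le hapos hab.le
    linarith
  -- positivity of 1 - ρ2/(N2+t) for t ∈ [0,N1]
  have hux : 0 < 1 - ρ2 / (N2 + x) := by
    rw [sub_pos]; exact (div_lt_one (by linarith)).mpr (by linarith)
  have huy : 0 < 1 - ρ2 / (N2 + y) := by
    rw [sub_pos]; exact (div_lt_one (by linarith)).mpr (by linarith)
  have hvb : 0 < 1 - ρ2 / (N1 + N2) := by
    rw [sub_pos]; exact (div_lt_one hbpos).mpr (by linarith)
  -- numerator positive
  have h' : (1 - ρ1 / (N1 + k2)) / (N1 + N2) < (1 - ρ1 / (N1 + N2)) / (N1 + k2) := by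
    rw [div_lt_div_iff₀ hbpos hapos]
    have e1 : (1 - ρ1 / (N1 + k2)) * (N1 + k2) = N1 + k2 - ρ1 := by
      field_simp
    have e2 : (1 - ρ1 / (N1 + N2)) * (N1 + N2) = N1 + N2 - ρ1 := by
      field_simp
    linarith
  have hNum : 0 < (1 - ρ1 / (N1 + N2)) * (1 / (N1 + k2)) / (1 - ρ1 / (N1 + k2)) ^ 2
      - (1 / (N1 + N2)) / (1 - ρ1 / (N1 + k2)) := by
    have key : (1 / (N1 + N2)) / (1 - ρ1 / (N1 + k2))
        < (1 - ρ1 / (N1 + N2)) * (1 / (N1 + k2)) / (1 - ρ1 / (N1 + k2)) ^ 2 := by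
      rw [div_lt_div_iff₀ hua (by positivity)]
      have hmul := mul_lt_mul_of_pos_right h' hua
      calc 1 / (N1 + N2) * (1 - ρ1 / (N1 + k2)) ^ 2
          = ((1 - ρ1 / (N1 + k2)) / (N1 + N2)) * (1 - ρ1 / (N1 + k2)) := by ring
        _ < ((1 - ρ1 / (N1 + N2)) / (N1 + k2)) * (1 - ρ1 / (N1 + k2)) := hmul
        _ = (1 - ρ1 / (N1 + N2)) * (1 / (N1 + k2)) * (1 - ρ1 / (N1 + k2)) := by ring
    linarith
  -- E strictly decreasing
  have hEmono : (1 - ρ2 / (N1 + N2)) / (1 - ρ2 / (N2 + y))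
      < (1 - ρ2 / (N1 + N2)) / (1 - ρ2 / (N2 + x)) := by
    apply div_lt_div_of_pos_left hvb hux
    have : ρ2 / (N2 + y) < ρ2 / (N2 + x) :=
      div_lt_div_of_pos_left hρ2 (by linarith) (by linarith)
    linarith
  -- denominators positive
  have hEx : 0 < (1 - ρ2 / (N1 + N2)) / (1 - ρ2 / (N2 + x)) := div_pos hvb hux
  have hEy : 0 < (1 - ρ2 / (N1 + N2)) / (1 - ρ2 / (N2 + y)) := div_pos hvb huy
  have hDenx : 0 < (1 - ρ1 / (N1 + N2)) / (1 - ρ1 / (N1 + k2))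
      + (1 - ρ2 / (N1 + N2)) / (1 - ρ2 / (N2 + x)) - 1 := by linarith
  have hDeny : 0 < (1 - ρ1 / (N1 + N2)) / (1 - ρ1 / (N1 + k2))
      + (1 - ρ2 / (N1 + N2)) / (1 - ρ2 / (N2 + y)) - 1 := by linarith
  apply mul_lt_mul_of_pos_left _ (by positivity : (0:ℝ) < 1 / ν1)
  apply add_lt_add_right
  exact div_lt_div_of_pos_left hNum hDeny (by linarith)
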